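/- Let r ≥ 1 be an integer, let x_1,…,x_r be complex numbers such that x_j ∉ {0,1,−1} for all j and x_j² ≠ x_k² for j ≠ k, and let α, β, γ be complex numbers with γ ≠ 0 and γ ≠ 2. Then d(x) = 2r + (2(1−α)(1−β)/(γ(γ−2))) · (1 − ∏_{k=1}^r ((γ−1)² − x_k²)/(1 − x_k²)). -/

import Mathlib

open Finset
open Polynomial

noncomputable section AndersonAux

variable (r : ℕ) (x : Fin r → ℂ) (α β γ : ℂ)

def dxLL (j : Fin r) : ℂ[X] := (X - C (x j)) * (X + C (x j))
def dxQQ : ℂ[X] := ∏ j, dxLL r x j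
def dxQE (k : Fin r) : ℂ[X] := ∏ j ∈ univ.erase k, dxLL r x j
def dxM1 : ℂ[X] := (X + C α) * (X + C β) * ∏ j, ((X + C (γ - x j)) * (X + C (γ + x j)))
def dxM2 : ℂ[X] := (X + C (γ/2)) * (X + C 1) * dxQQ r x
def dxDkp (k : Fin r) : ℂ[X] := (X + C (γ/2)) * (X + C 1) * (X + C (x k)) * dxQE r x k
def dxDkm (k : Fin r) : ℂ[X] := (X + C (γ/2)) * (X + C 1) * (X - C (x k)) * dxQE r x k
def dxD1 : ℂ[X] := (X + C (γ/2)) * dxQQ r x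
def dxDg : ℂ[X] := (X + C 1) * dxQQ r x

def dxaa (k : Fin r) : ℂ :=
  ((x k + α) * (x k + β)) / (x k * (x k + 1)) *
    ∏ j ∈ univ.erase k, (((x k + γ) ^ 2 - (x j) ^ 2) / ((x k) ^ 2 - (x j) ^ 2))
def dxbb (k : Fin r) : ℂ :=
  ((x k - α) * (x k - β)) / (x k * (x k - 1)) *
    ∏ j ∈ univ.erase k, (((x k - γ) ^ 2 - (x j) ^ 2) / ((x k) ^ 2 - (x j) ^ 2))
def dxAA : ℂ :=
  2 * (1 - α) * (1 - β) / (γ * (γ - 2)) * ∏ k, (((γ - 1) ^ 2 - (x k) ^ 2) / (1 - (x k) ^ 2))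
def dxBB : ℂ := (2 * α - γ) * (2 * β - γ) / (γ * (2 - γ))

def dxEE : ℂ[X] :=
  C 2 * dxM1 r x α β γ - C 2 * dxM2 r x γ -
    (∑ k, (C (2 * γ * dxaa r x α β γ k) * dxDkp r x γ k
          + C (2 * γ * dxbb r x α β γ k) * dxDkm r x γ k)) -
    C (2 * γ * dxAA r x α β γ) * dxD1 r x γ - C (γ * dxBB α β γ) * dxDg r x

-- monic / degree facts
lemma dxLL_monic (j : Fin r) : (dxLL r x j).Monic :=
  (monic_X_sub_C _).mul (monic_X_add_C _)

lemma dxLL_natDegree (j : Fin r) : (dxLL r x j).natDegree = 2 := by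
  rw [dxLL, (monic_X_sub_C _).natDegree_mul (monic_X_add_C _), natDegree_X_sub_C,
    natDegree_X_add_C]

lemma dxQQ_monic : (dxQQ r x).Monic :=
  monic_prod_of_monic _ _ fun j _ => dxLL_monic r x j

lemma dxQQ_natDegree : (dxQQ r x).natDegree = 2 * r := by
  rw [dxQQ, natDegree_prod_of_monic _ _ fun j _ => dxLL_monic r x j,
    Finset.sum_congr rfl fun j _ => dxLL_natDegree r x j, Finset.sum_const, card_univ,
    Fintype.card_fin, smul_eq_mul, mul_comm]

lemma dxQE_monic (k : Fin r) : (dxQE r x k).Monic :=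
  monic_prod_of_monic _ _ fun j _ => dxLL_monic r x j

lemma dxQE_natDegree (k : Fin r) : (dxQE r x k).natDegree = 2 * (r - 1) := by
  rw [dxQE, natDegree_prod_of_monic _ _ fun j _ => dxLL_monic r x j]
  rw [Finset.sum_congr rfl fun j _ => dxLL_natDegree r x j, Finset.sum_const, smul_eq_mul]
  have : (univ.erase k).card = r - 1 := by
    rw [card_erase_of_mem (mem_univ k), card_univ, Fintype.card_fin]
  rw [this, mul_comm]

lemma dxM1_monic : (dxM1 r x α β γ).Monic :=
  ((monic_X_add_C α).mul (monic_X_add_C β)).mul <|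
    monic_prod_of_monic _ _ fun j _ => (monic_X_add_C _).mul (monic_X_add_C _)

lemma dxM1_natDegree : (dxM1 r x α β γ).natDegree = 2 * r + 2 := by
  rw [dxM1, Monic.natDegree_mul ((monic_X_add_C α).mul (monic_X_add_C β))
    (monic_prod_of_monic _ _ fun j _ => (monic_X_add_C _).mul (monic_X_add_C _)),
    (monic_X_add_C α).natDegree_mul (monic_X_add_C β),
    natDegree_prod_of_monic _ _ fun j _ => (monic_X_add_C _).mul (monic_X_add_C _)]
  have h2 : ∀ j : Fin r, ((X + C (γ - x j)) * (X + C (γ + x j))).natDegree = 2 := fun j => by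
    rw [(monic_X_add_C _).natDegree_mul (monic_X_add_C _), natDegree_X_add_C, natDegree_X_add_C]
  rw [Finset.sum_congr rfl fun j _ => h2 j, Finset.sum_const, card_univ, Fintype.card_fin,
    smul_eq_mul, natDegree_X_add_C, natDegree_X_add_C]
  omega

lemma dxM2_monic : (dxM2 r x γ).Monic :=
  ((monic_X_add_C _).mul (monic_X_add_C _)).mul (dxQQ_monic r x)

lemma dxM2_natDegree : (dxM2 r x γ).natDegree = 2 * r + 2 := by
  rw [dxM2, Monic.natDegree_mul (((monic_X_add_C _).mul (monic_X_add_C _))) (dxQQ_monic r x),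
    (monic_X_add_C _).natDegree_mul (monic_X_add_C _), natDegree_X_add_C, natDegree_X_add_C,
    dxQQ_natDegree]
  ring

lemma dxDkp_monic (k : Fin r) : (dxDkp r x γ k).Monic :=
  (((monic_X_add_C _).mul (monic_X_add_C _)).mul (monic_X_add_C _)).mul (dxQE_monic r x k)

lemma dxDkm_monic (k : Fin r) : (dxDkm r x γ k).Monic := by
  exact (((monic_X_add_C _).mul (monic_X_add_C _)).mul (monic_X_sub_C _)).mul
    (dxQE_monic r x k)

lemma dxDkp_natDegree (k : Fin r) (hr : 1 ≤ r) : (dxDkp r x γ k).natDegree = 2 * r + 1 := by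
  rw [dxDkp, Monic.natDegree_mul
    (((monic_X_add_C _).mul (monic_X_add_C _)).mul (monic_X_add_C _)) (dxQE_monic r x k),
    Monic.natDegree_mul ((monic_X_add_C _).mul (monic_X_add_C _)) (monic_X_add_C _),
    (monic_X_add_C _).natDegree_mul (monic_X_add_C _), dxQE_natDegree,
    natDegree_X_add_C, natDegree_X_add_C, natDegree_X_add_C]
  omega

lemma dxDkm_natDegree (k : Fin r) (hr : 1 ≤ r) : (dxDkm r x γ k).natDegree = 2 * r + 1 := by
  rw [dxDkm, Monic.natDegree_mul
    (((monic_X_add_C _).mul (monic_X_add_C _)).mul (monic_X_sub_C _)) (dxQE_monic r x k),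
    Monic.natDegree_mul ((monic_X_add_C _).mul (monic_X_add_C _)) (monic_X_sub_C _),
    (monic_X_add_C _).natDegree_mul (monic_X_add_C _), dxQE_natDegree,
    natDegree_X_add_C, natDegree_X_add_C, natDegree_X_sub_C]
  omega

lemma dxD1_monic : (dxD1 r x γ).Monic := (monic_X_add_C _).mul (dxQQ_monic r x)

lemma dxD1_natDegree : (dxD1 r x γ).natDegree = 2 * r + 1 := by
  rw [dxD1, Monic.natDegree_mul (monic_X_add_C _) (dxQQ_monic r x), natDegree_X_add_C,
    dxQQ_natDegree]
  ring

lemma dxDg_monic : (dxDg r x).Monic := (monic_X_add_C _).mul (dxQQ_monic r x)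

lemma dxDg_natDegree : (dxDg r x).natDegree = 2 * r + 1 := by
  rw [dxDg, Monic.natDegree_mul (monic_X_add_C _) (dxQQ_monic r x), natDegree_X_add_C,
    dxQQ_natDegree]
  ring

end AndersonAux

section EvalLemmas

variable (r : ℕ) (x : Fin r → ℂ) (α β γ : ℂ)

lemma dxQQ_eval_pm (k : Fin r) (ε : ℂ) (hε : ε = 1 ∨ ε = -1) :
    eval (ε * x k) (dxQQ r x) = 0 := by
  rw [dxQQ, eval_prod]
  refine prod_eq_zero (mem_univ k) ?_
  rcases hε with h | h <;> simp [dxLL, h] <;> ring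

lemma dxQE_eval_pm (k j : Fin r) (h : k ≠ j) (ε : ℂ) (hε : ε = 1 ∨ ε = -1) :
    eval (ε * x k) (dxQE r x j) = 0 := by
  rw [dxQE, eval_prod]
  refine prod_eq_zero (mem_erase.mpr ⟨h, mem_univ k⟩) ?_
  rcases hε with h | h <;> simp [dxLL, h] <;> ring

end EvalLemmas

section MainEvals

variable (r : ℕ) (x : Fin r → ℂ) (α β γ : ℂ)

lemma dxEE_eval_xk (hx0 : ∀ j, x j ≠ 0) (hxm1 : ∀ j, x j ≠ -1)
    (hxx : ∀ j k : Fin r, j ≠ k → (x j) ^ 2 ≠ (x k) ^ 2) (k : Fin r) :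
    eval (x k) (dxEE r x α β γ) = 0 := by
  have hQ : eval (x k) (dxQQ r x) = 0 := by
    simpa using dxQQ_eval_pm r x k 1 (Or.inl rfl)
  have hsum : eval (x k) (∑ j, (C (2*γ*dxaa r x α β γ j) * dxDkp r x γ j
        + C (2*γ*dxbb r x α β γ j) * dxDkm r x γ j))
      = 2*γ*dxaa r x α β γ k * eval (x k) (dxDkp r x γ k) := by
    rw [eval_finset_sum, Finset.sum_eq_single_of_mem k (mem_univ k) ?_]
    · have hm : eval (x k) (dxDkm r x γ k) = 0 := by simp [dxDkm]
      simp [hm]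
    · intro j _ hj
      have h1 : eval (x k) (dxQE r x j) = 0 := by
        simpa using dxQE_eval_pm r x k j (Ne.symm hj) 1 (Or.inl rfl)
      simp [dxDkp, dxDkm, h1]
  have hM1 : eval (x k) (dxM1 r x α β γ)
      = (x k + α) * (x k + β) * ((γ * (2 * x k + γ)) *
          ∏ j ∈ univ.erase k, ((x k + γ) ^ 2 - (x j) ^ 2)) := by
    simp only [dxM1, eval_mul, eval_add, eval_X, eval_C, eval_prod]
    rw [← Finset.mul_prod_erase univ _ (mem_univ k),
      Finset.prod_congr rfl (fun j _ => (by ring :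
        (x k + (γ - x j)) * (x k + (γ + x j)) = (x k + γ) ^ 2 - (x j) ^ 2))]
    ring
  have hDkp : eval (x k) (dxDkp r x γ k)
      = (x k + γ/2) * (x k + 1) * (2 * x k) *
          ∏ j ∈ univ.erase k, ((x k) ^ 2 - (x j) ^ 2) := by
    simp only [dxDkp, dxQE, dxLL, eval_mul, eval_add, eval_sub, eval_X, eval_C, eval_prod]
    rw [Finset.prod_congr rfl (fun j _ => (by ring :
      (x k - x j) * (x k + x j) = (x k) ^ 2 - (x j) ^ 2))]
    ring
  have hV : (∏ j ∈ univ.erase k, ((x k) ^ 2 - (x j) ^ 2)) ≠ 0 :=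
    prod_ne_zero_iff.mpr fun j hj =>
      sub_ne_zero.mpr (Ne.symm (hxx j k (mem_erase.mp hj).1))
  have hxk := hx0 k
  have hxk1 : x k + 1 ≠ 0 := fun h => hxm1 k (by linear_combination h)
  simp only [dxEE, eval_sub, eval_mul, eval_C]
  rw [hsum, show eval (x k) (dxM2 r x γ) = 0 by simp [dxM2, hQ],
    show eval (x k) (dxD1 r x γ) = 0 by simp [dxD1, hQ],
    show eval (x k) (dxDg r x) = 0 by simp [dxDg, hQ], hM1, hDkp, dxaa,
    Finset.prod_div_distrib]
  field_simp
  ring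

lemma dxEE_eval_negxk (hx0 : ∀ j, x j ≠ 0) (hx1 : ∀ j, x j ≠ 1)
    (hxx : ∀ j k : Fin r, j ≠ k → (x j) ^ 2 ≠ (x k) ^ 2) (k : Fin r) :
    eval (-(x k)) (dxEE r x α β γ) = 0 := by
  have hQ : eval (-(x k)) (dxQQ r x) = 0 := by
    simpa [neg_one_mul] using dxQQ_eval_pm r x k (-1) (Or.inr rfl)
  have hsum : eval (-(x k)) (∑ j, (C (2*γ*dxaa r x α β γ j) * dxDkp r x γ j
        + C (2*γ*dxbb r x α β γ j) * dxDkm r x γ j))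
      = 2*γ*dxbb r x α β γ k * eval (-(x k)) (dxDkm r x γ k) := by
    rw [eval_finset_sum, Finset.sum_eq_single_of_mem k (mem_univ k) ?_]
    · have hm : eval (-(x k)) (dxDkp r x γ k) = 0 := by simp [dxDkp]
      simp [hm]
    · intro j _ hj
      have h1 : eval (-(x k)) (dxQE r x j) = 0 := by
        simpa [neg_one_mul] using dxQE_eval_pm r x k j (Ne.symm hj) (-1) (Or.inr rfl)
      simp [dxDkp, dxDkm, h1]
  have hM1 : eval (-(x k)) (dxM1 r x α β γ)
      = (-(x k) + α) * (-(x k) + β) * ((γ * (γ - 2 * x k)) *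
          ∏ j ∈ univ.erase k, ((x k - γ) ^ 2 - (x j) ^ 2)) := by
    simp only [dxM1, eval_mul, eval_add, eval_X, eval_C, eval_prod]
    rw [← Finset.mul_prod_erase univ _ (mem_univ k),
      Finset.prod_congr rfl (fun j _ => (by ring :
        (-(x k) + (γ - x j)) * (-(x k) + (γ + x j)) = (x k - γ) ^ 2 - (x j) ^ 2))]
    ring
  have hDkm : eval (-(x k)) (dxDkm r x γ k)
      = (-(x k) + γ/2) * (-(x k) + 1) * (-(2 * x k)) *
          ∏ j ∈ univ.erase k, ((x k) ^ 2 - (x j) ^ 2) := by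
    simp only [dxDkm, dxQE, dxLL, eval_mul, eval_add, eval_sub, eval_X, eval_C, eval_prod]
    rw [Finset.prod_congr rfl (fun j _ => (by ring :
      (-(x k) - x j) * (-(x k) + x j) = (x k) ^ 2 - (x j) ^ 2))]
    ring
  have hV : (∏ j ∈ univ.erase k, ((x k) ^ 2 - (x j) ^ 2)) ≠ 0 :=
    prod_ne_zero_iff.mpr fun j hj =>
      sub_ne_zero.mpr (Ne.symm (hxx j k (mem_erase.mp hj).1))
  have hxk := hx0 k
  have hxk1 : x k - 1 ≠ 0 := sub_ne_zero.mpr (hx1 k)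
  simp only [dxEE, eval_sub, eval_mul, eval_C]
  rw [hsum, show eval (-(x k)) (dxM2 r x γ) = 0 by simp [dxM2, hQ],
    show eval (-(x k)) (dxD1 r x γ) = 0 by simp [dxD1, hQ],
    show eval (-(x k)) (dxDg r x) = 0 by simp [dxDg, hQ], hM1, hDkm, dxbb,
    Finset.prod_div_distrib]
  field_simp
  ring

lemma dxEE_eval_neg1 (h1x : ∀ j, (1 : ℂ) - (x j) ^ 2 ≠ 0) (hγ0 : γ ≠ 0) (hγ2 : γ ≠ 2) :
    eval (-1) (dxEE r x α β γ) = 0 := by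
  have hsum : eval (-1 : ℂ) (∑ j, (C (2*γ*dxaa r x α β γ j) * dxDkp r x γ j
        + C (2*γ*dxbb r x α β γ j) * dxDkm r x γ j)) = 0 := by
    rw [eval_finset_sum]
    refine Finset.sum_eq_zero fun j _ => by simp [dxDkp, dxDkm]
  have hM1 : eval (-1 : ℂ) (dxM1 r x α β γ)
      = (-1 + α) * (-1 + β) * ∏ j, ((γ - 1) ^ 2 - (x j) ^ 2) := by
    simp only [dxM1, eval_mul, eval_add, eval_X, eval_C, eval_prod]
    rw [Finset.prod_congr rfl (fun j _ => (by ring :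
      ((-1 : ℂ) + (γ - x j)) * (-1 + (γ + x j)) = (γ - 1) ^ 2 - (x j) ^ 2))]
  have hD1 : eval (-1 : ℂ) (dxD1 r x γ)
      = (-1 + γ/2) * ∏ j, (1 - (x j) ^ 2) := by
    simp only [dxD1, dxQQ, dxLL, eval_mul, eval_add, eval_sub, eval_X, eval_C, eval_prod]
    rw [Finset.prod_congr rfl (fun j _ => (by ring :
      ((-1 : ℂ) - x j) * (-1 + x j) = 1 - (x j) ^ 2))]
  have hW : (∏ j, ((1 : ℂ) - (x j) ^ 2)) ≠ 0 := prod_ne_zero_iff.mpr fun j _ => h1x j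
  have hγ2' : γ - 2 ≠ 0 := sub_ne_zero.mpr hγ2
  simp only [dxEE, eval_sub, eval_mul, eval_C]
  rw [hsum, show eval (-1 : ℂ) (dxM2 r x γ) = 0 by simp [dxM2],
    show eval (-1 : ℂ) (dxDg r x) = 0 by simp [dxDg], hM1, hD1, dxAA,
    Finset.prod_div_distrib]
  field_simp
  ring

lemma dxEE_eval_neghalfγ (hγ0 : γ ≠ 0) (hγ2 : γ ≠ 2) :
    eval (-(γ/2)) (dxEE r x α β γ) = 0 := by
  have hz : (-(γ/2) : ℂ) + γ/2 = 0 := by ring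
  have hsum : eval (-(γ/2) : ℂ) (∑ j, (C (2*γ*dxaa r x α β γ j) * dxDkp r x γ j
        + C (2*γ*dxbb r x α β γ j) * dxDkm r x γ j)) = 0 := by
    rw [eval_finset_sum]
    refine Finset.sum_eq_zero fun j _ => by simp [dxDkp, dxDkm, hz]
  have hM1 : eval (-(γ/2) : ℂ) (dxM1 r x α β γ)
      = (-(γ/2) + α) * (-(γ/2) + β) * ∏ j, ((γ/2) ^ 2 - (x j) ^ 2) := by
    simp only [dxM1, eval_mul, eval_add, eval_X, eval_C, eval_prod]
    rw [Finset.prod_congr rfl (fun j _ => (by ring :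
      ((-(γ/2) : ℂ) + (γ - x j)) * (-(γ/2) + (γ + x j)) = (γ/2) ^ 2 - (x j) ^ 2))]
  have hDg : eval (-(γ/2) : ℂ) (dxDg r x)
      = (-(γ/2) + 1) * ∏ j, ((γ/2) ^ 2 - (x j) ^ 2) := by
    simp only [dxDg, dxQQ, dxLL, eval_mul, eval_add, eval_sub, eval_X, eval_C, eval_prod]
    rw [Finset.prod_congr rfl (fun j _ => (by ring :
      ((-(γ/2) : ℂ) - x j) * (-(γ/2) + x j) = (γ/2) ^ 2 - (x j) ^ 2))]
  have hγ2' : (2 : ℂ) - γ ≠ 0 := fun h => hγ2 (by linear_combination -h)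
  simp only [dxEE, eval_sub, eval_mul, eval_C]
  rw [hsum, show eval (-(γ/2) : ℂ) (dxM2 r x γ) = 0 by simp [dxM2, hz],
    show eval (-(γ/2) : ℂ) (dxD1 r x γ) = 0 by simp [dxD1, hz], hM1, hDg, dxBB]
  field_simp
  ring

end MainEvals

section Vanish

variable (r : ℕ) (x : Fin r → ℂ) (α β γ : ℂ)

lemma dxEE_natDegree_lt : (dxEE r x α β γ).natDegree < 2 * r + 2 := by
  have h12 : (C 2 * dxM1 r x α β γ - C 2 * dxM2 r x γ).natDegree ≤ 2 * r + 1 := by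
    have he : C 2 * dxM1 r x α β γ - C 2 * dxM2 r x γ
        = C 2 * (dxM1 r x α β γ - dxM2 r x γ) := by ring
    rw [he]
    refine (natDegree_C_mul_le _ _).trans ?_
    by_cases h : dxM1 r x α β γ - dxM2 r x γ = 0
    · simp [h]
    · have hd : (dxM1 r x α β γ - dxM2 r x γ).degree < (dxM1 r x α β γ).degree :=
        degree_sub_lt
          (by rw [degree_eq_natDegree (dxM1_monic r x α β γ).ne_zero,
            degree_eq_natDegree (dxM2_monic r x γ).ne_zero, dxM1_natDegree, dxM2_natDegree])
          (dxM1_monic r x α β γ).ne_zero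
          (by rw [(dxM1_monic r x α β γ).leadingCoeff, (dxM2_monic r x γ).leadingCoeff])
      rw [degree_eq_natDegree (dxM1_monic r x α β γ).ne_zero, dxM1_natDegree] at hd
      have := (natDegree_lt_iff_degree_lt h).mpr hd
      omega
  have hS : (∑ k, (C (2 * γ * dxaa r x α β γ k) * dxDkp r x γ k
      + C (2 * γ * dxbb r x α β γ k) * dxDkm r x γ k)).natDegree ≤ 2 * r + 1 := by
    refine natDegree_sum_le_of_forall_le _ _ fun k _ => ?_
    refine (natDegree_add_le _ _).trans (max_le ?_ ?_)
    · exact (natDegree_C_mul_le _ _).trans (dxDkp_natDegree r x γ k k.pos).le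
    · exact (natDegree_C_mul_le _ _).trans (dxDkm_natDegree r x γ k k.pos).le
  have hD1' : (C (2 * γ * dxAA r x α β γ) * dxD1 r x γ).natDegree ≤ 2 * r + 1 :=
    (natDegree_C_mul_le _ _).trans (dxD1_natDegree r x γ).le
  have hDg' : (C (γ * dxBB α β γ) * dxDg r x).natDegree ≤ 2 * r + 1 :=
    (natDegree_C_mul_le _ _).trans (dxDg_natDegree r x).le
  have : (dxEE r x α β γ).natDegree ≤ 2 * r + 1 := by
    rw [dxEE]
    refine (natDegree_sub_le _ _).trans (max_le ((natDegree_sub_le _ _).trans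
      (max_le ((natDegree_sub_le _ _).trans (max_le h12 hS)) hD1')) hDg')
  omega

lemma dxEE_eq_zero (hx0 : ∀ j, x j ≠ 0) (hx1 : ∀ j, x j ≠ 1) (hxm1 : ∀ j, x j ≠ -1)
    (hxx : ∀ j k : Fin r, j ≠ k → (x j) ^ 2 ≠ (x k) ^ 2)
    (hγ0 : γ ≠ 0) (hγ2 : γ ≠ 2)
    (hg1 : ∀ k, γ ≠ 2 * x k) (hg2 : ∀ k, γ ≠ -(2 * x k)) :
    dxEE r x α β γ = 0 := by
  have h1x : ∀ j, (1 : ℂ) - (x j) ^ 2 ≠ 0 := fun j h => by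
    have h1 : (x j - 1) * (x j + 1) = 0 := by linear_combination -h
    rcases mul_eq_zero.mp h1 with h2 | h2
    · exact hx1 j (by linear_combination h2)
    · exact hxm1 j (by linear_combination h2)
  have hne_neg : ∀ k l, x k ≠ -(x l) := by
    intro k l h
    by_cases hkl : k = l
    · subst hkl; exact hx0 k (by linear_combination h / 2)
    · exact hxx k l hkl (by rw [h]; ring)
  set v : (Fin r ⊕ Fin r) ⊕ Fin 2 → ℂ :=
    Sum.elim (Sum.elim (fun k => x k) (fun k => -(x k)))
      (fun i => if i = 0 then -1 else -(γ/2)) with hv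
  have hinj : Function.Injective v := by
    rintro ((k | k) | i) ((l | l) | j) hab <;>
      simp only [hv, Sum.elim_inl, Sum.elim_inr] at hab
    · by_cases hkl : k = l
      · rw [hkl]
      · exact absurd (by rw [hab] : (x k) ^ 2 = (x l) ^ 2) (hxx k l hkl)
    · exact absurd hab (hne_neg k l)
    · exfalso; fin_cases j <;> simp at hab
      · exact hxm1 k hab
      · exact hg2 k (by linear_combination 2 * hab)
    · exact absurd hab.symm (hne_neg l k)
    · by_cases hkl : k = l
      · rw [hkl]
      · have : x k = x l := by linear_combination -hab
        exact absurd (by rw [this] : (x k) ^ 2 = (x l) ^ 2) (hxx k l hkl)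
    · exfalso; fin_cases j <;> simp at hab
      · exact hx1 k hab
      · exact hg1 k (by linear_combination -2 * hab)
    · exfalso; fin_cases i <;> simp at hab
      · exact hxm1 l hab.symm
      · exact hg2 l (by linear_combination -2 * hab)
    · exfalso; fin_cases i <;> simp at hab
      · exact hx1 l hab.symm
      · exact hg1 l (by linear_combination 2 * hab)
    · fin_cases i <;> fin_cases j <;> simp_all
      · exfalso; exact hγ2 (by linear_combination -2 * hab)
      · exfalso; exact hγ2 (by linear_combination 2 * hab)
  refine eq_zero_of_natDegree_lt_card_of_eval_eq_zero _ hinj ?_ ?_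
  · rintro ((k | k) | i)
    · exact dxEE_eval_xk r x α β γ hx0 hxm1 hxx k
    · exact dxEE_eval_negxk r x α β γ hx0 hx1 hxx k
    · fin_cases i
      · exact dxEE_eval_neg1 r x α β γ h1x hγ0 hγ2
      · exact dxEE_eval_neghalfγ r x α β γ hγ0 hγ2
  · have : Fintype.card ((Fin r ⊕ Fin r) ⊕ Fin 2) = 2 * r + 2 := by
      simp [Fintype.card_sum]; omega
    rw [this]
    exact dxEE_natDegree_lt r x α β γ

end Vanish

section CoeffExtract

variable (r : ℕ) (x : Fin r → ℂ) (α β γ : ℂ)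

lemma dxM1_coeff : (dxM1 r x α β γ).coeff (2 * r + 1) = α + β + 2 * (r : ℂ) * γ := by
  have h2 := nextCoeff_of_natDegree_pos (p := dxM1 r x α β γ)
    (by rw [dxM1_natDegree]; omega)
  rw [dxM1_natDegree, show 2 * r + 2 - 1 = 2 * r + 1 by omega] at h2
  rw [← h2, dxM1, Monic.nextCoeff_mul ((monic_X_add_C α).mul (monic_X_add_C β))
      (monic_prod_of_monic _ _ fun j _ => (monic_X_add_C _).mul (monic_X_add_C _)),
    Monic.nextCoeff_mul (monic_X_add_C α) (monic_X_add_C β),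
    Monic.nextCoeff_prod _ _ fun j _ => (monic_X_add_C _).mul (monic_X_add_C _),
    nextCoeff_X_add_C, nextCoeff_X_add_C,
    Finset.sum_congr rfl (fun j _ => by
      rw [Monic.nextCoeff_mul (monic_X_add_C _) (monic_X_add_C _), nextCoeff_X_add_C,
        nextCoeff_X_add_C]),
    Finset.sum_congr rfl (fun j _ => (by ring : γ - x j + (γ + x j) = 2 * γ)),
    Finset.sum_const, card_univ, Fintype.card_fin, nsmul_eq_mul]
  ring

lemma dxQQ_nextCoeff : (dxQQ r x).nextCoeff = 0 := by
  rw [dxQQ, Monic.nextCoeff_prod _ _ fun j _ => dxLL_monic r x j]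
  rw [Finset.sum_congr rfl (fun j _ => by
    rw [dxLL, Monic.nextCoeff_mul (monic_X_sub_C _) (monic_X_add_C _), nextCoeff_X_sub_C,
      nextCoeff_X_add_C])]
  simp

lemma dxM2_coeff : (dxM2 r x γ).coeff (2 * r + 1) = γ / 2 + 1 := by
  have h2 := nextCoeff_of_natDegree_pos (p := dxM2 r x γ) (by rw [dxM2_natDegree]; omega)
  rw [dxM2_natDegree, show 2 * r + 2 - 1 = 2 * r + 1 by omega] at h2
  rw [← h2, dxM2, Monic.nextCoeff_mul ((monic_X_add_C _).mul (monic_X_add_C _))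
      (dxQQ_monic r x),
    Monic.nextCoeff_mul (monic_X_add_C _) (monic_X_add_C _), nextCoeff_X_add_C,
    nextCoeff_X_add_C, dxQQ_nextCoeff, add_zero]

lemma dxDkp_coeff (k : Fin r) : (dxDkp r x γ k).coeff (2 * r + 1) = 1 := by
  have := (dxDkp_monic r x γ k).coeff_natDegree
  rwa [dxDkp_natDegree r x γ k k.pos] at this

lemma dxDkm_coeff (k : Fin r) : (dxDkm r x γ k).coeff (2 * r + 1) = 1 := by
  have := (dxDkm_monic r x γ k).coeff_natDegree
  rwa [dxDkm_natDegree r x γ k k.pos] at this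

lemma dxD1_coeff : (dxD1 r x γ).coeff (2 * r + 1) = 1 := by
  have := (dxD1_monic r x γ).coeff_natDegree
  rwa [dxD1_natDegree r x γ] at this

lemma dxDg_coeff : (dxDg r x).coeff (2 * r + 1) = 1 := by
  have := (dxDg_monic r x).coeff_natDegree
  rwa [dxDg_natDegree r x] at this

theorem dx_formula_generic (hx0 : ∀ j, x j ≠ 0) (hx1 : ∀ j, x j ≠ 1) (hxm1 : ∀ j, x j ≠ -1)
    (hxx : ∀ j k : Fin r, j ≠ k → (x j) ^ 2 ≠ (x k) ^ 2)
    (hγ0 : γ ≠ 0) (hγ2 : γ ≠ 2)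
    (hg1 : ∀ k, γ ≠ 2 * x k) (hg2 : ∀ k, γ ≠ -(2 * x k)) :
    ∑ k, (dxaa r x α β γ k + dxbb r x α β γ k)
      = 2 * r + 2 * (1 - α) * (1 - β) / (γ * (γ - 2)) *
          (1 - ∏ k, (((γ - 1) ^ 2 - (x k) ^ 2) / (1 - (x k) ^ 2))) := by
  have hE := dxEE_eq_zero r x α β γ hx0 hx1 hxm1 hxx hγ0 hγ2 hg1 hg2
  have h := congrArg (fun p => p.coeff (2 * r + 1)) hE
  simp only [dxEE, coeff_sub, coeff_zero, finset_sum_coeff, coeff_add, coeff_C_mul] at h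
  rw [dxM1_coeff, dxM2_coeff, dxD1_coeff, dxDg_coeff,
    Finset.sum_congr rfl (fun k _ => by
      rw [dxDkp_coeff r x γ k, dxDkm_coeff r x γ k, mul_one, mul_one])] at h
  have hsum : ∑ k, (2 * γ * dxaa r x α β γ k + 2 * γ * dxbb r x α β γ k)
      = 2 * γ * ∑ k, (dxaa r x α β γ k + dxbb r x α β γ k) := by
    rw [Finset.mul_sum]; exact sum_congr rfl fun k _ => by ring
  rw [hsum] at h
  have h2γ : (2 : ℂ) * γ ≠ 0 := mul_ne_zero two_ne_zero hγ0
  have hγ2' : γ - 2 ≠ 0 := sub_ne_zero.mpr hγ2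
  have hγ2'' : (2 : ℂ) - γ ≠ 0 := fun hh => hγ2 (by linear_combination -hh)
  have hS : ∑ k, (dxaa r x α β γ k + dxbb r x α β γ k)
      = (2 * (α + β + 2 * (r : ℂ) * γ) - 2 * (γ / 2 + 1) - 2 * γ * dxAA r x α β γ
          - γ * dxBB α β γ) / (2 * γ) := by
    rw [eq_div_iff h2γ]
    linear_combination -h
  rw [hS, dxAA, dxBB]
  set P := ∏ k, (((γ - 1) ^ 2 - (x k) ^ 2) / (1 - (x k) ^ 2)) with hP
  field_simp
  ring

end CoeffExtract

section Density

variable (r : ℕ) (x : Fin r → ℂ) (α β γ : ℂ)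

noncomputable def dxca (k : Fin r) : ℂ :=
  ((x k + α) * (x k + β)) / (x k * (x k + 1) * ∏ j ∈ univ.erase k, ((x k) ^ 2 - (x j) ^ 2))
noncomputable def dxcb (k : Fin r) : ℂ :=
  ((x k - α) * (x k - β)) / (x k * (x k - 1) * ∏ j ∈ univ.erase k, ((x k) ^ 2 - (x j) ^ 2))

lemma dxaa_eq (k : Fin r) : dxaa r x α β γ k
    = dxca r x α β k * ∏ j ∈ univ.erase k, ((x k + γ) ^ 2 - (x j) ^ 2) := by
  rw [dxaa, dxca, Finset.prod_div_distrib, div_mul_div_comm, div_mul_eq_mul_div]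

lemma dxbb_eq (k : Fin r) : dxbb r x α β γ k
    = dxcb r x α β k * ∏ j ∈ univ.erase k, ((x k - γ) ^ 2 - (x j) ^ 2) := by
  rw [dxbb, dxcb, Finset.prod_div_distrib, div_mul_div_comm, div_mul_eq_mul_div]

end Density

theorem dx_formula_gamma_ne_zero_two (r : ℕ) (hr : 1 ≤ r) (x : Fin r → ℂ)
    (hx0 : ∀ j, x j ≠ 0) (hx1 : ∀ j, x j ≠ 1) (hxm1 : ∀ j, x j ≠ -1)
    (hxx : ∀ j k : Fin r, j ≠ k → (x j) ^ 2 ≠ (x k) ^ 2)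
    (α β γ : ℂ) (hγ0 : γ ≠ 0) (hγ2 : γ ≠ 2) :
    (∑ k : Fin r,
      (((x k + α) * (x k + β)) / (x k * (x k + 1)) *
          ∏ j ∈ univ.erase k, ((x k + γ) ^ 2 - (x j) ^ 2) / ((x k) ^ 2 - (x j) ^ 2)
        + ((x k - α) * (x k - β)) / (x k * (x k - 1)) *
          ∏ j ∈ univ.erase k, ((x k - γ) ^ 2 - (x j) ^ 2) / ((x k) ^ 2 - (x j) ^ 2)))
      = 2 * r + (2 * (1 - α) * (1 - β) / (γ * (γ - 2))) *
          (1 - ∏ k : Fin r, ((γ - 1) ^ 2 - (x k) ^ 2) / (1 - (x k) ^ 2)) := by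
  classical
  have h1x : ∀ j, (1 : ℂ) - (x j) ^ 2 ≠ 0 := fun j h => by
    have h1 : (x j - 1) * (x j + 1) = 0 := by linear_combination -h
    rcases mul_eq_zero.mp h1 with h2 | h2
    · exact hx1 j (by linear_combination h2)
    · exact hxm1 j (by linear_combination h2)
  set W : ℂ := ∏ j, (1 - (x j) ^ 2) with hW
  have hWne : W ≠ 0 := prod_ne_zero_iff.mpr fun j _ => h1x j
  -- the polynomials in the γ-variable
  set Lpoly : Polynomial ℂ :=
    (∑ k, (Polynomial.C (dxca r x α β k) *
        ∏ j ∈ univ.erase k, ((Polynomial.C (x k) + Polynomial.X) ^ 2 - Polynomial.C ((x j) ^ 2))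
      + Polynomial.C (dxcb r x α β k) *
        ∏ j ∈ univ.erase k, ((Polynomial.C (x k) - Polynomial.X) ^ 2 - Polynomial.C ((x j) ^ 2))))
      * (Polynomial.X * (Polynomial.X - Polynomial.C 2)) * Polynomial.C W with hLp
  set Rpoly : Polynomial ℂ :=
    Polynomial.C (2 * (r : ℂ)) * (Polynomial.X * (Polynomial.X - Polynomial.C 2)) *
        Polynomial.C W
      + Polynomial.C (2 * (1 - α) * (1 - β)) *
        (Polynomial.C W - ∏ j, ((Polynomial.X - Polynomial.C 1) ^ 2 - Polynomial.C ((x j) ^ 2)))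
      with hRp
  have hLeval : ∀ t : ℂ, Polynomial.eval t Lpoly
      = (∑ k, (dxca r x α β k * ∏ j ∈ univ.erase k, ((x k + t) ^ 2 - (x j) ^ 2)
          + dxcb r x α β k * ∏ j ∈ univ.erase k, ((x k - t) ^ 2 - (x j) ^ 2)))
        * (t * (t - 2)) * W := by
    intro t
    simp [hLp, Polynomial.eval_finset_sum, Polynomial.eval_prod]
  have hReval : ∀ t : ℂ, Polynomial.eval t Rpoly
      = 2 * (r : ℂ) * (t * (t - 2)) * W
        + 2 * (1 - α) * (1 - β) * (W - ∏ j, ((t - 1) ^ 2 - (x j) ^ 2)) := by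
    intro t
    simp [hRp, Polynomial.eval_prod]
  -- equality of the two polynomials via infinitely many evaluation points
  have hpoly : Lpoly = Rpoly := by
    apply Polynomial.eq_of_infinite_eval_eq
    have hbadfin : (({0, 2} : Set ℂ) ∪ (Set.range fun k => 2 * x k)
        ∪ (Set.range fun k => -(2 * x k))).Finite :=
      (((Set.finite_singleton 2).insert 0).union (Set.finite_range _)).union (Set.finite_range _)
    refine Set.Infinite.mono ?_ hbadfin.infinite_compl
    intro t ht
    simp only [Set.mem_compl_iff, Set.mem_union, Set.mem_insert_iff, Set.mem_singleton_iff,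
      Set.mem_range, not_or, not_exists] at ht
    obtain ⟨⟨⟨ht0, ht2⟩, hb1⟩, hb2⟩ := ht
    show Polynomial.eval t Lpoly = Polynomial.eval t Rpoly
    rw [hLeval, hReval]
    have hgen := dx_formula_generic r x α β t hx0 hx1 hxm1 hxx ht0 ht2
      (fun k h => hb1 k h.symm) (fun k h => hb2 k h.symm)
    rw [Finset.sum_congr rfl (fun k _ => by
      rw [dxaa_eq r x α β t k, dxbb_eq r x α β t k]), Finset.prod_div_distrib, ← hW] at hgen
    set PnT := ∏ j, ((t - 1) ^ 2 - (x j) ^ 2) with hPnT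
    have ht0' : t ≠ 0 := ht0
    have ht2' : t - 2 ≠ 0 := sub_ne_zero.mpr ht2
    rw [hgen]
    field_simp [ht0', ht2', hWne]
  -- evaluate at the actual γ
  show (∑ k, (dxaa r x α β γ k + dxbb r x α β γ k)) = _
  rw [Finset.sum_congr rfl (fun k _ => by
    rw [dxaa_eq r x α β γ k, dxbb_eq r x α β γ k]), Finset.prod_div_distrib, ← hW]
  set Pn := ∏ k, ((γ - 1) ^ 2 - (x k) ^ 2) with hPn
  set S := ∑ k, (dxca r x α β k * ∏ j ∈ univ.erase k, ((x k + γ) ^ 2 - (x j) ^ 2)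
      + dxcb r x α β k * ∏ j ∈ univ.erase k, ((x k - γ) ^ 2 - (x j) ^ 2)) with hS
  have hev : S * (γ * (γ - 2)) * W
      = 2 * (r : ℂ) * (γ * (γ - 2)) * W + 2 * (1 - α) * (1 - β) * (W - Pn) := by
    rw [hS, ← hLeval γ, hpoly, hReval γ, hPn]
  have hγ2' : γ - 2 ≠ 0 := sub_ne_zero.mpr hγ2
  have hd : γ * (γ - 2) * W ≠ 0 := mul_ne_zero (mul_ne_zero hγ0 hγ2') hWne
  have h2 : S = (2 * (r : ℂ) * (γ * (γ - 2)) * W + 2 * (1 - α) * (1 - β) * (W - Pn))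
      / (γ * (γ - 2) * W) := by
    rw [eq_div_iff hd]
    linear_combination hev
  rw [h2]
  field_simp [hγ0, hγ2', hWne]
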